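/- (Lemma 2.) Assume 0 < γ ≤ 2. Let (φ, y, ρ, H) be a right-maximal solution of the flat FLRW system on I = [t₀, T) satisfying the Friedmann constraint at every t ∈ I and with ρ(t₀) ≥ 0. Suppose there exist t₁ ∈ I and V̄ ∈ ℝ such that V(φ(t)) ≤ V̄ for all t ∈ I with t ≥ t₁, and that either (i) V̄ < 0, or (ii) V̄ ≥ 0 and H(t₁) < −√(V̄/3). Then T < ∞ and H(t) → −∞ as t → T⁻. -/

import Mathlib

open Real Set Filter Topology
set_option maxHeartbeats 2000000

/-- A solution of the flat FLRW system on the set `I`: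
`φ' = y`, `y' = -3Hy - V'(φ) + α(φ)ρ`, `ρ' = -ρ(3γH + α(φ)y)`, `H' = -(1/2)(y² + γρ)`. -/
def IsFLRWSolution (γ : ℝ) (α V : ℝ → ℝ) (I : Set ℝ) (φ y ρ H : ℝ → ℝ) : Prop :=
  ∀ t ∈ I,
    HasDerivWithinAt φ (y t) I t ∧
    HasDerivWithinAt y (-3 * H t * y t - deriv V (φ t) + α (φ t) * ρ t) I t ∧
    HasDerivWithinAt ρ (-(ρ t) * (3 * γ * H t + α (φ t) * y t)) I t ∧
    HasDerivWithinAt H (-(1/2) * (y t ^ 2 + γ * ρ t)) I t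

/-- The Friedmann constraint `3H² = (1/2)y² + V(φ) + ρ` at time `t`. -/
def FriedmannConstraint (V : ℝ → ℝ) (φ y ρ H : ℝ → ℝ) (t : ℝ) : Prop :=
  3 * H t ^ 2 = (1/2) * y t ^ 2 + V (φ t) + ρ t

/-- The interval `[t₀, T)` with possibly infinite right endpoint `T : EReal`. -/
def IcoE (t₀ : ℝ) (T : EReal) : Set ℝ := {t : ℝ | t₀ ≤ t ∧ (t : EReal) < T}

/-- The filter of real times `t → T⁻` (this is `𝓝[<] T` for finite `T`, and `atTop`
for `T = ⊤`). -/
noncomputable def leftLimFilter (T : EReal) : Filter ℝ :=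
  Filter.comap (fun t : ℝ => (t : EReal)) (nhdsWithin T (Set.Iio T))

/-- The solution `(φ, y, ρ, H)` on `[t₀, T)` extends to a solution of the same system
on the set `J`. -/
def ExtendsSol (γ : ℝ) (α V : ℝ → ℝ) (t₀ : ℝ) (T : EReal)
    (φ y ρ H : ℝ → ℝ) (J : Set ℝ) : Prop :=
  ∃ φ' y' ρ' H' : ℝ → ℝ,
    IsFLRWSolution γ α V J φ' y' ρ' H' ∧
    Set.EqOn φ φ' (IcoE t₀ T) ∧ Set.EqOn y y' (IcoE t₀ T) ∧
    Set.EqOn ρ ρ' (IcoE t₀ T) ∧ Set.EqOn H H' (IcoE t₀ T)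

/-- A solution on `[t₀, T)` is right-maximal if it can be extended neither to a solution
on `[t₀, T]` (when `T` is finite) nor to a solution on `[t₀, T')` for some `T' > T`. -/
def RightMaximal (γ : ℝ) (α V : ℝ → ℝ) (t₀ : ℝ) (T : EReal)
    (φ y ρ H : ℝ → ℝ) : Prop :=
  ¬ ((T ≠ ⊤ ∧ ExtendsSol γ α V t₀ T φ y ρ H (Set.Icc t₀ T.toReal)) ∨
     (∃ T' : EReal, T < T' ∧ ExtendsSol γ α V t₀ T φ y ρ H (IcoE t₀ T')))

section Helpers

lemma aux_antitone {f f' : ℝ → ℝ} {a b : ℝ}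
    (hf : ∀ t ∈ Icc a b, HasDerivWithinAt f (f' t) (Icc a b) t)
    (h0 : ∀ t ∈ Icc a b, f' t ≤ 0) : AntitoneOn f (Icc a b) := by
  apply antitoneOn_of_hasDerivWithinAt_nonpos (convex_Icc a b)
      (fun t ht => (hf t ht).continuousWithinAt) (f' := f')
  · intro x hx
    rw [interior_Icc] at hx ⊢
    exact (hf x (Ioo_subset_Icc_self hx)).mono Ioo_subset_Icc_self
  · intro x hx
    rw [interior_Icc] at hx
    exact h0 x (Ioo_subset_Icc_self hx)

lemma aux_linear_le {f f' : ℝ → ℝ} {a b c : ℝ}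
    (hf : ∀ t ∈ Icc a b, HasDerivWithinAt f (f' t) (Icc a b) t)
    (h0 : ∀ t ∈ Icc a b, f' t ≤ c) : ∀ t ∈ Icc a b, f t ≤ f a + c * (t - a) := by
  intro t ht
  have hab : a ≤ b := le_trans ht.1 ht.2
  have hA : AntitoneOn (fun u => f u - c * u) (Icc a b) := by
    apply aux_antitone (f' := fun u => f' u - c)
    · intro u hu
      have h := (hf u hu).sub (((hasDerivAt_id u).const_mul c).hasDerivWithinAt)
      rw [mul_one] at h
      exact h
    · intro u hu; linarith [h0 u hu]
  have := hA (left_mem_Icc.2 hab) ht ht.1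
  simp only at this
  linarith

lemma endpoint_hasDerivWithinAt {f g : ℝ → ℝ} {a b : ℝ} (hab : a < b)
    (hf : ∀ x ∈ Ioo a b, HasDerivAt f (g x) x)
    (hfc : Continuous f) (hgc : Continuous g) :
    HasDerivWithinAt f (g b) (Icc a b) b := by
  have hdiff : DifferentiableOn ℝ f (Ioo a b) := fun x hx =>
    (hf x hx).differentiableAt.differentiableWithinAt
  have hs : Ioo a b ∈ 𝓝[<] b := Ioo_mem_nhdsLT_of_mem ⟨hab, le_refl b⟩
  have hlim : Tendsto (fun x => deriv f x) (𝓝[<] b) (𝓝 (g b)) := by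
    refine ((hgc.tendsto b).mono_left nhdsWithin_le_nhds).congr' ?_
    filter_upwards [hs] with x hx
    exact ((hf x hx).deriv).symm
  exact (hasDerivWithinAt_Iic_of_tendsto_deriv hdiff hfc.continuousWithinAt hs hlim).mono
    Icc_subset_Iic_self

lemma aux_rho_nonneg {g ρ : ℝ → ℝ} {a b K : ℝ}
    (hρd : ∀ t ∈ Icc a b, HasDerivWithinAt ρ (-(ρ t) * g t) (Icc a b) t)
    (hK : ∀ t ∈ Icc a b, |g t| ≤ K) (h0 : 0 ≤ ρ a) : ∀ t ∈ Icc a b, 0 ≤ ρ t := by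
  have hcont : ContinuousOn ρ (Icc a b) := fun t ht => (hρd t ht).continuousWithinAt
  by_contra hcon
  push_neg at hcon
  obtain ⟨s, hs, hsneg⟩ := hcon
  have hab : a ≤ b := le_trans hs.1 hs.2
  set S : Set ℝ := {t | t ∈ Icc a s ∧ 0 ≤ ρ t} with hS
  have hSne : S.Nonempty := ⟨a, ⟨left_mem_Icc.2 hs.1, h0⟩⟩
  have hSbdd : BddAbove S := ⟨s, fun t ht => ht.1.2⟩
  set c := sSup S with hc
  have hcS : c ∈ S := by
    have hclosed : IsClosed S := by
      have : S = Icc a s ∩ ρ ⁻¹' (Ici 0) := by ext t; simp [hS, and_comm]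
      rw [this]
      exact ContinuousOn.preimage_isClosed_of_isClosed
        (hcont.mono (Icc_subset_Icc_right hs.2)) isClosed_Icc isClosed_Ici
    exact hclosed.closure_subset (csSup_mem_closure hSne hSbdd)
  have hca : a ≤ c := le_csSup hSbdd ⟨left_mem_Icc.2 hs.1, h0⟩
  have hcs : c ≤ s := csSup_le hSne fun t ht => ht.1.2
  have hcs' : c < s := by
    rcases lt_or_eq_of_le hcs with h | h
    · exact h
    · exfalso; rw [h] at hcS; exact absurd hcS.2 (not_le.2 hsneg)
  have hneg : ∀ t ∈ Ioc c s, ρ t < 0 := by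
    intro t ht
    by_contra h
    push_neg at h
    exact absurd (le_csSup hSbdd ⟨⟨le_trans hca ht.1.le, ht.2⟩, h⟩) (not_le.2 ht.1)
  have hρc : ρ c = 0 := by
    refine le_antisymm ?_ hcS.2
    have hne : (𝓝[Ioc c s] c).NeBot := by
      rw [← mem_closure_iff_nhdsWithin_neBot, closure_Ioc hcs'.ne]
      exact left_mem_Icc.2 hcs
    have htend : Tendsto ρ (𝓝[Ioc c s] c) (𝓝 (ρ c)) :=
      ((hcont c ⟨hca, le_trans hcs hs.2⟩).mono
        (Ioc_subset_Icc_self.trans (Icc_subset_Icc hca hs.2) : Ioc c s ⊆ Icc a b)).tendsto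
    exact le_of_tendsto htend (eventually_mem_nhdsWithin.mono fun t ht => (hneg t ht).le)
  have hgr := norm_le_gronwallBound_of_norm_deriv_right_le (f := ρ)
    (f' := fun t => -(ρ t) * g t) (δ := 0) (K := K) (ε := 0) (a := c) (b := s)
    (hcont.mono (Icc_subset_Icc hca hs.2))
    (fun x hx => by
      refine (hρd x ⟨le_trans hca hx.1, le_trans hx.2.le hs.2⟩).mono_of_mem_nhdsWithin ?_
      refine mem_of_superset (Icc_mem_nhdsGE_of_mem (α := ℝ)
        ⟨le_refl x, lt_of_lt_of_le hx.2 hs.2⟩) ?_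
      exact Icc_subset_Icc (le_trans hca hx.1) le_rfl)
    (by simp [hρc])
    (fun x hx => by
      rw [norm_mul, norm_neg]
      have := hK x ⟨le_trans hca hx.1, le_trans hx.2.le hs.2⟩
      have h1 : (0:ℝ) ≤ ‖ρ x‖ := norm_nonneg _
      calc ‖ρ x‖ * ‖g x‖ ≤ ‖ρ x‖ * K := by
            exact mul_le_mul_of_nonneg_left (by simpa [Real.norm_eq_abs] using this) h1
        _ = K * ‖ρ x‖ + 0 := by ring)
  have hfin := hgr s (right_mem_Icc.2 hcs)
  rw [gronwallBound_ε0] at hfin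
  simp only [zero_mul, Real.norm_eq_abs] at hfin
  have : ρ s = 0 := abs_eq_zero.1 (le_antisymm hfin (abs_nonneg _))
  linarith

end Helpers

theorem flrw_lemma2_finite_time_recollapse
    (γ : ℝ) (hγ : 0 < γ) (hγ2 : γ ≤ 2)
    (α V : ℝ → ℝ) (hα : Continuous α) (hV : ContDiff ℝ 2 V)
    (t₀ : ℝ) (T : EReal) (hT : (t₀ : EReal) < T)
    (φ y ρ H : ℝ → ℝ)
    (hsol : IsFLRWSolution γ α V (IcoE t₀ T) φ y ρ H)
    (hmax : RightMaximal γ α V t₀ T φ y ρ H)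
    (hcon : ∀ t ∈ IcoE t₀ T, FriedmannConstraint V φ y ρ H t)
    (hρ₀ : 0 ≤ ρ t₀)
    (t₁ : ℝ) (ht₁ : t₁ ∈ IcoE t₀ T) (Vbar : ℝ)
    (hbound : ∀ t ∈ IcoE t₀ T, t₁ ≤ t → V (φ t) ≤ Vbar)
    (hcase : Vbar < 0 ∨ (0 ≤ Vbar ∧ H t₁ < -Real.sqrt (Vbar / 3))) :
    T < ⊤ ∧ Tendsto H (leftLimFilter T) atBot := by
  have hmemI : ∀ {t : ℝ}, t ∈ IcoE t₀ T ↔ t₀ ≤ t ∧ (t : EReal) < T := Iff.rfl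
  have hsub : ∀ {s : ℝ}, s ∈ IcoE t₀ T → Icc t₀ s ⊆ IcoE t₀ T := by
    intro s hs t ht
    exact ⟨ht.1, lt_of_le_of_lt (EReal.coe_le_coe_iff.2 ht.2) hs.2⟩
  -- ρ is nonnegative on I
  have hρpos : ∀ t ∈ IcoE t₀ T, 0 ≤ ρ t := by
    intro s hs
    have hIcc := hsub hs
    have hφc : ContinuousOn φ (Icc t₀ s) := fun t ht =>
      ((hsol t (hIcc ht)).1.mono hIcc).continuousWithinAt
    have hyc : ContinuousOn y (Icc t₀ s) := fun t ht =>
      ((hsol t (hIcc ht)).2.1.mono hIcc).continuousWithinAt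
    have hHc : ContinuousOn H (Icc t₀ s) := fun t ht =>
      ((hsol t (hIcc ht)).2.2.2.mono hIcc).continuousWithinAt
    have hg : ContinuousOn (fun t => 3 * γ * H t + α (φ t) * y t) (Icc t₀ s) :=
      (continuousOn_const.mul hHc).add ((hα.comp_continuousOn hφc).mul hyc)
    obtain ⟨K, hK⟩ := isCompact_Icc.exists_bound_of_continuousOn hg
    exact aux_rho_nonneg
      (fun t ht => ((hsol t (hIcc ht)).2.2.1).mono hIcc)
      (fun t ht => by simpa [Real.norm_eq_abs] using hK t ht) hρ₀ s (right_mem_Icc.2 hs.1)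
  -- H is antitone
  have hHanti : ∀ ⦃s⦄, s ∈ IcoE t₀ T → ∀ ⦃t⦄, t ∈ IcoE t₀ T → s ≤ t → H t ≤ H s := by
    intro s hs t ht hst
    have hIcc := hsub ht
    refine aux_antitone (f' := fun u => -(1/2) * (y u ^ 2 + γ * ρ u))
      (fun u hu => ((hsol u (hIcc hu)).2.2.2).mono hIcc)
      (fun u hu => by nlinarith [sq_nonneg (y u), mul_nonneg hγ.le (hρpos u (hIcc hu))])
      ⟨hs.1, hst⟩ (right_mem_Icc.2 ht.1) hst
  -- key differential inequality
  have hkey : ∀ t ∈ IcoE t₀ T, t₁ ≤ t →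
      -(1/2) * (y t ^ 2 + γ * ρ t) ≤ -(γ/2) * (3 * H t ^ 2 - Vbar) := by
    intro t ht h1t
    have hc := hcon t ht
    unfold FriedmannConstraint at hc
    have hb := hbound t ht h1t
    have hρ := hρpos t ht
    nlinarith [mul_nonneg (by linarith : (0:ℝ) ≤ 2 - γ) (sq_nonneg (y t)),
      mul_nonneg hγ.le (sub_nonneg.2 hb)]
  -- uniform negative upper bound for H' after t₁
  obtain ⟨δ, hδpos, hδ⟩ : ∃ δ : ℝ, 0 < δ ∧ ∀ t ∈ IcoE t₀ T, t₁ ≤ t →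
      -(γ/2) * (3 * H t ^ 2 - Vbar) ≤ -δ := by
    rcases hcase with h | ⟨hV0, hH1⟩
    · refine ⟨γ/2 * (-Vbar), by nlinarith, fun t ht h1t => ?_⟩
      nlinarith [mul_nonneg hγ.le (sq_nonneg (H t))]
    · have hs3 : Real.sqrt (Vbar/3) ^ 2 = Vbar/3 := Real.sq_sqrt (by linarith)
      have hsn : 0 ≤ Real.sqrt (Vbar/3) := Real.sqrt_nonneg _
      have hH1' : H t₁ < 0 := lt_of_lt_of_le hH1 (by linarith)
      have hsq : Vbar/3 < H t₁ ^ 2 := by nlinarith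
      refine ⟨γ/2 * (3 * H t₁ ^ 2 - Vbar), by nlinarith, fun t ht h1t => ?_⟩
      have hm := hHanti ht₁ ht h1t
      have h2 : H t₁ ^ 2 ≤ H t ^ 2 := by nlinarith
      nlinarith [mul_nonneg hγ.le (sub_nonneg.2 h2)]
  -- linear decay of H after t₁
  have hlin : ∀ t ∈ IcoE t₀ T, t₁ ≤ t → H t ≤ H t₁ + (-δ) * (t - t₁) := by
    intro t ht h1t
    have hIcc : Icc t₁ t ⊆ IcoE t₀ T := fun u hu =>
      ⟨le_trans ht₁.1 hu.1, lt_of_le_of_lt (EReal.coe_le_coe_iff.2 hu.2) ht.2⟩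
    exact aux_linear_le
      (f' := fun u => -(1/2) * (y u ^ 2 + γ * ρ u))
      (fun u hu => ((hsol u (hIcc hu)).2.2.2).mono hIcc)
      (fun u hu => le_trans (hkey u (hIcc hu) hu.1) (hδ u (hIcc hu) hu.1))
      t (right_mem_Icc.2 h1t)
  -- T is not ⊤
  have hTne : T ≠ ⊤ := by
    intro hTt
    have hmem : ∀ {t : ℝ}, t₀ ≤ t → t ∈ IcoE t₀ T := fun h =>
      ⟨h, by rw [hTt]; exact EReal.coe_lt_top _⟩
    set m := max Vbar 0 with hm
    have hmV : Vbar ≤ m := le_max_left _ _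
    have hm0 : 0 ≤ m := le_max_right _ _
    have hsqm : Real.sqrt m ^ 2 = m := Real.sq_sqrt hm0
    have hsn : 0 ≤ Real.sqrt m := Real.sqrt_nonneg m
    set hstar : ℝ := -(1 + Real.sqrt m) with hhstar
    have hsneg : hstar < 0 := by rw [hhstar]; linarith
    have h2V : 2 * Vbar ≤ 3 * hstar ^ 2 := by rw [hhstar]; nlinarith
    set t₂ : ℝ := max t₁ (t₁ + (H t₁ - hstar)/δ) with ht₂def
    have ht₂1 : t₁ ≤ t₂ := le_max_left _ _
    have ht₂I : t₂ ∈ IcoE t₀ T := hmem (le_trans ht₁.1 ht₂1)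
    have hHt₂ : H t₂ ≤ hstar := by
      have h1 := hlin t₂ ht₂I ht₂1
      have h2 : (H t₁ - hstar)/δ ≤ t₂ - t₁ := by
        have := le_max_right t₁ (t₁ + (H t₁ - hstar)/δ); linarith
      have h3 : H t₁ - hstar ≤ δ * (t₂ - t₁) := by
        have := (div_le_iff₀ hδpos).1 h2; linarith [this]
      linarith
    have hHneg : ∀ t ∈ IcoE t₀ T, t₂ ≤ t → H t ≤ hstar := fun t ht h2t =>
      le_trans (hHanti ht₂I ht h2t) hHt₂
    -- Riccati comparison via 1/H
    have hGlin : ∀ t ∈ IcoE t₀ T, t₂ ≤ t →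
        -(H t)⁻¹ ≤ -(H t₂)⁻¹ + (-(3*γ/4)) * (t - t₂) := by
      intro t ht h2t
      have hIcc : Icc t₂ t ⊆ IcoE t₀ T := fun u hu =>
        ⟨le_trans ht₂I.1 hu.1, lt_of_le_of_lt (EReal.coe_le_coe_iff.2 hu.2) ht.2⟩
      refine aux_linear_le
        (f := fun u => -(H u)⁻¹)
        (f' := fun u => (-(1/2) * (y u ^ 2 + γ * ρ u)) / (H u) ^ 2)
        (fun u hu => ?_) (fun u hu => ?_) t (right_mem_Icc.2 h2t)
      · have hne : H u ≠ 0 :=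
          ne_of_lt (lt_of_le_of_lt (hHneg u (hIcc hu) hu.1) hsneg)
        have := (((hsol u (hIcc hu)).2.2.2).mono hIcc).inv hne
        have h := this.neg
        rw [neg_div, neg_neg] at h
        exact h
      · have huI := hIcc hu
        have h1 := hkey u huI (le_trans ht₂1 hu.1)
        have hu2 : H u ≤ hstar := hHneg u huI hu.1
        have hupos : 0 < H u ^ 2 := by nlinarith
        rw [div_le_iff₀ hupos]
        have hsq2 : hstar ^ 2 ≤ H u ^ 2 := by nlinarith
        calc -(1/2) * (y u ^ 2 + γ * ρ u) ≤ -(γ/2) * (3 * H u ^ 2 - Vbar) := h1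
          _ ≤ -(3*γ/4) * H u ^ 2 := by nlinarith [mul_nonneg hγ.le (sub_nonneg.2 hsq2)]
    have hGt₂neg : (H t₂)⁻¹ < 0 := inv_lt_zero.2 (lt_of_le_of_lt hHt₂ hsneg)
    set t₃ : ℝ := t₂ + (-(H t₂)⁻¹) * (4/(3*γ)) + 1 with ht₃def
    have h23 : t₂ ≤ t₃ := by
      have h1 : 0 < (-(H t₂)⁻¹) * (4/(3*γ)) := by
        apply mul_pos (by linarith) (by positivity)
      rw [ht₃def]; linarith
    have ht₃I : t₃ ∈ IcoE t₀ T := hmem (le_trans ht₂I.1 h23)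
    have hG := hGlin t₃ ht₃I h23
    have hH3 : H t₃ < 0 := lt_of_le_of_lt (hHneg t₃ ht₃I h23) hsneg
    have hG3 : (H t₃)⁻¹ < 0 := inv_lt_zero.2 hH3
    have h30 : t₃ - t₂ = (-(H t₂)⁻¹) * (4/(3*γ)) + 1 := by rw [ht₃def]; ring
    have hγ0 : γ ≠ 0 := ne_of_gt hγ
    have hone : (3*γ/4) * (4/(3*γ)) = 1 := by field_simp
    have hcalc : -(3*γ/4) * ((-(H t₂)⁻¹) * (4/(3*γ)) + 1) = -(-(H t₂)⁻¹ + 3*γ/4) := by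
      calc -(3*γ/4) * ((-(H t₂)⁻¹) * (4/(3*γ)) + 1)
          = -((-(H t₂)⁻¹) * ((3*γ/4) * (4/(3*γ)))) - 3*γ/4 := by ring
        _ = -(-(H t₂)⁻¹ + 3*γ/4) := by rw [hone]; ring
    rw [h30, hcalc] at hG
    linarith
  -- T is a real number
  obtain ⟨τ, rfl⟩ : ∃ τ : ℝ, T = (τ : EReal) := by
    have hbot : T ≠ ⊥ := fun h => by simp [h] at hT
    exact ⟨T.toReal, (EReal.coe_toReal hTne hbot).symm⟩
  have hτ : t₀ < τ := EReal.coe_lt_coe_iff.1 hT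
  have hIeq : IcoE t₀ (τ : EReal) = Ico t₀ τ := by
    ext t; simp [IcoE, EReal.coe_lt_coe_iff, mem_Ico]
  refine ⟨EReal.coe_lt_top τ, ?_⟩
  by_cases hbdd : ∃ L, ∀ t ∈ IcoE t₀ (τ : EReal), L ≤ H t
  · -- bounded case: contradiction with right-maximality via extension
    exfalso
    obtain ⟨L, hL⟩ := hbdd
    rw [hIeq] at hsol hcon hρpos hL
    have hHanti' : ∀ ⦃s⦄, s ∈ Ico t₀ τ → ∀ ⦃t⦄, t ∈ Ico t₀ τ → s ≤ t → H t ≤ H s := by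
      rw [← hIeq]; exact hHanti
    have hφc : ContinuousOn φ (Ico t₀ τ) := fun t ht => ((hsol t ht).1).continuousWithinAt
    have hyc : ContinuousOn y (Ico t₀ τ) := fun t ht => ((hsol t ht).2.1).continuousWithinAt
    have hρc : ContinuousOn ρ (Ico t₀ τ) := fun t ht => ((hsol t ht).2.2.1).continuousWithinAt
    have hHc : ContinuousOn H (Ico t₀ τ) := fun t ht => ((hsol t ht).2.2.2).continuousWithinAt
    have ht₀J : t₀ ∈ Ico t₀ τ := ⟨le_refl _, hτ⟩
    have hHup : ∀ t ∈ Ico t₀ τ, H t ≤ H t₀ := fun t ht => hHanti' ht₀J ht ht.1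
    obtain ⟨MH, hMHdef⟩ : ∃ c : ℝ, c = |L| + |H t₀| := ⟨_, rfl⟩
    have hMH : ∀ t ∈ Ico t₀ τ, |H t| ≤ MH := by
      intro t ht
      rw [abs_le]
      constructor
      · have := neg_abs_le L; have := hL t ht; have := abs_nonneg (H t₀); rw [hMHdef]; linarith
      · have := le_abs_self (H t₀); have := hHup t ht; have := abs_nonneg L; rw [hMHdef]; linarith
    have hMH0 : 0 ≤ MH := by rw [hMHdef]; positivity
    -- derivatives at interior points
    have hder : ∀ x ∈ Ioo t₀ τ,
        HasDerivAt φ (y x) x ∧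
        HasDerivAt y (-3 * H x * y x - deriv V (φ x) + α (φ x) * ρ x) x ∧
        HasDerivAt ρ (-(ρ x) * (3 * γ * H x + α (φ x) * y x)) x ∧
        HasDerivAt H (-(1/2) * (y x ^ 2 + γ * ρ x)) x := by
      intro x hx
      have hnb : Ico t₀ τ ∈ 𝓝 x := mem_of_superset (isOpen_Ioo.mem_nhds hx) Ioo_subset_Ico_self
      obtain ⟨d1, d2, d3, d4⟩ := hsol x ⟨hx.1.le, hx.2⟩
      exact ⟨d1.hasDerivAt hnb, d2.hasDerivAt hnb, d3.hasDerivAt hnb, d4.hasDerivAt hnb⟩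
    have hIccJ : ∀ {s}, s ∈ Ico t₀ τ → Icc t₀ s ⊆ Ico t₀ τ := fun {s} hs u hu =>
      ⟨hu.1, lt_of_le_of_lt hu.2 hs.2⟩
    -- FTC for H
    have hintc : ∀ {s}, s ∈ Ico t₀ τ →
        ContinuousOn (fun u => -(1/2) * (y u ^ 2 + γ * ρ u)) (Icc t₀ s) := fun {s} hs =>
      continuousOn_const.mul (((hyc.mono (hIccJ hs)).pow 2).add
        (continuousOn_const.mul (hρc.mono (hIccJ hs))))
    have hFTCH : ∀ s ∈ Ico t₀ τ,
        (∫ u in t₀..s, -(1/2) * (y u ^ 2 + γ * ρ u)) = H s - H t₀ := by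
      intro s hs
      refine intervalIntegral.integral_eq_sub_of_hasDeriv_right_of_le hs.1
        (hHc.mono (hIccJ hs))
        (fun x hx => ((hder x ⟨hx.1, lt_trans hx.2 hs.2⟩).2.2.2).hasDerivWithinAt) ?_
      exact (hintc hs).intervalIntegrable_of_Icc hs.1
    -- integral bound for y²
    have hy2cont : ∀ {s}, s ∈ Ico t₀ τ → ContinuousOn (fun u => y u ^ 2) (Icc t₀ s) :=
      fun {s} hs => (hyc.mono (hIccJ hs)).pow 2
    have hy2int : ∀ s ∈ Ico t₀ τ, (∫ u in t₀..s, y u ^ 2) ≤ 2 * (H t₀ - L) := by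
      intro s hs
      have hint1 : IntervalIntegrable (fun u => y u ^ 2) MeasureTheory.volume t₀ s :=
        (hy2cont hs).intervalIntegrable_of_Icc hs.1
      have hint2 : IntervalIntegrable (fun u => y u ^ 2 + γ * ρ u) MeasureTheory.volume t₀ s :=
        (((hyc.mono (hIccJ hs)).pow 2).add
          (continuousOn_const.mul (hρc.mono (hIccJ hs)))).intervalIntegrable_of_Icc hs.1
      have hmono := intervalIntegral.integral_mono_on hs.1 hint1 hint2
        (fun x hx => by nlinarith [mul_nonneg hγ.le (hρpos x (hIccJ hs hx))])
      have h2 : (∫ u in t₀..s, (y u ^ 2 + γ * ρ u))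
          = (-2) * ∫ u in t₀..s, -(1/2) * (y u ^ 2 + γ * ρ u) := by
        rw [← intervalIntegral.integral_const_mul]
        apply intervalIntegral.integral_congr
        intro u _; ring
      rw [h2, hFTCH s hs] at hmono
      have := hL s hs
      linarith
    -- FTC for φ and bound for φ
    have hFTCφ : ∀ s ∈ Ico t₀ τ, (∫ u in t₀..s, y u) = φ s - φ t₀ := by
      intro s hs
      refine intervalIntegral.integral_eq_sub_of_hasDeriv_right_of_le hs.1
        (hφc.mono (hIccJ hs))
        (fun x hx => ((hder x ⟨hx.1, lt_trans hx.2 hs.2⟩).1).hasDerivWithinAt) ?_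
      exact (hyc.mono (hIccJ hs)).intervalIntegrable_of_Icc hs.1
    obtain ⟨M₁, hM₁def⟩ : ∃ c : ℝ, c = (τ - t₀)/2 + (H t₀ - L) := ⟨_, rfl⟩
    have hφdist : ∀ s ∈ Ico t₀ τ, |φ s - φ t₀| ≤ M₁ := by
      intro s hs
      have hyint : IntervalIntegrable y MeasureTheory.volume t₀ s :=
        (hyc.mono (hIccJ hs)).intervalIntegrable_of_Icc hs.1
      have habs : |∫ u in t₀..s, y u| ≤ ∫ u in t₀..s, |y u| :=
        intervalIntegral.abs_integral_le_integral_abs hs.1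
      have h2 : (∫ u in t₀..s, |y u|) ≤ ∫ u in t₀..s, (1/2 + (1/2) * y u ^ 2) := by
        refine intervalIntegral.integral_mono_on hs.1
          ((hyc.mono (hIccJ hs)).abs.intervalIntegrable_of_Icc hs.1)
          ((continuousOn_const.add (continuousOn_const.mul (hy2cont hs))).intervalIntegrable_of_Icc hs.1)
          (fun x _ => ?_)
        nlinarith [sq_nonneg (|y x| - 1), sq_abs (y x), abs_nonneg (y x)]
      have h3 : (∫ u in t₀..s, (1/2 + (1/2) * y u ^ 2))
          = (s - t₀) * (1/2) + (1/2) * ∫ u in t₀..s, y u ^ 2 := by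
        rw [intervalIntegral.integral_add intervalIntegrable_const
          (((continuousOn_const.mul (hy2cont hs))).intervalIntegrable_of_Icc hs.1 :
            IntervalIntegrable (fun u => (1/2:ℝ) * y u ^ 2) MeasureTheory.volume t₀ s)]
        rw [intervalIntegral.integral_const, intervalIntegral.integral_const_mul]
        simp [smul_eq_mul]
      have h4 := hy2int s hs
      rw [hFTCφ s hs] at habs
      have hsτ : s ≤ τ := hs.2.le
      rw [hM₁def]
      have h5 : (∫ u in t₀..s, (1/2 + (1/2) * y u ^ 2)) ≤ (s - t₀)/2 + (H t₀ - L) := by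
        rw [h3]; linarith
      linarith
    have hM₁0 : 0 ≤ M₁ := le_trans (abs_nonneg (φ t₀ - φ t₀)) (hφdist t₀ ht₀J)
    obtain ⟨Kc, hKcdef⟩ : ∃ s : Set ℝ, s = Icc (φ t₀ - M₁) (φ t₀ + M₁) := ⟨_, rfl⟩
    have hφK : ∀ t ∈ Ico t₀ τ, φ t ∈ Kc := by
      intro t ht
      have := hφdist t ht
      rw [abs_le] at this
      rw [hKcdef]
      exact ⟨by linarith [this.1], by linarith [this.2]⟩
    have hKcomp : IsCompact Kc := by rw [hKcdef]; exact isCompact_Icc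
    obtain ⟨CV, hCV⟩ := hKcomp.exists_bound_of_continuousOn
      (hV.continuous.continuousOn (s := Kc))
    obtain ⟨CV', hCV'⟩ := hKcomp.exists_bound_of_continuousOn
      ((hV.continuous_deriv (by norm_num)).continuousOn (s := Kc))
    obtain ⟨Cα, hCα⟩ := hKcomp.exists_bound_of_continuousOn (hα.continuousOn (s := Kc))
    have hCV0 : 0 ≤ CV := le_trans (norm_nonneg _) (hCV _ (hφK t₀ ht₀J))
    have hCV'0 : 0 ≤ CV' := le_trans (norm_nonneg _) (hCV' _ (hφK t₀ ht₀J))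
    have hCα0 : 0 ≤ Cα := le_trans (norm_nonneg _) (hCα _ (hφK t₀ ht₀J))
    simp only [Real.norm_eq_abs] at hCV hCV' hCα
    -- pointwise bounds on y and ρ
    have hH2 : ∀ t ∈ Ico t₀ τ, H t ^ 2 ≤ MH ^ 2 := fun t ht =>
      sq_le_sq' (abs_le.1 (hMH t ht)).1 (abs_le.1 (hMH t ht)).2
    have hy2 : ∀ t ∈ Ico t₀ τ, y t ^ 2 ≤ 6 * MH ^ 2 + 2 * CV := by
      intro t ht
      have hc := hcon t ht
      unfold FriedmannConstraint at hc
      have h2 := hCV (φ t) (hφK t ht)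
      have h3 := hρpos t ht
      have h4 := hH2 t ht
      have h5 : -CV ≤ V (φ t) := by have := abs_le.1 h2; linarith [this.1]
      linarith
    obtain ⟨Cy, hCydef⟩ : ∃ c : ℝ, c = (1 + (6 * MH ^ 2 + 2 * CV))/2 := ⟨_, rfl⟩
    have hyb : ∀ t ∈ Ico t₀ τ, |y t| ≤ Cy := by
      intro t ht
      rw [hCydef]
      nlinarith [hy2 t ht, sq_abs (y t), sq_nonneg (|y t| - 1)]
    have hCy0 : 0 ≤ Cy := le_trans (abs_nonneg _) (hyb t₀ ht₀J)
    obtain ⟨Cρ, hCρdef⟩ : ∃ c : ℝ, c = 3 * MH ^ 2 + CV := ⟨_, rfl⟩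
    have hρb : ∀ t ∈ Ico t₀ τ, |ρ t| ≤ Cρ := by
      intro t ht
      have hc := hcon t ht
      unfold FriedmannConstraint at hc
      have h2 := hCV (φ t) (hφK t ht)
      have h3 := hρpos t ht
      have h4 := hH2 t ht
      have h5 : -CV ≤ V (φ t) := by have := abs_le.1 h2; linarith [this.1]
      rw [abs_of_nonneg h3, hCρdef]
      nlinarith [sq_nonneg (y t)]
    have hCρ0 : 0 ≤ Cρ := le_trans (abs_nonneg _) (hρb t₀ ht₀J)
    -- Lipschitz extensions
    have ext : ∀ {f f' : ℝ → ℝ} {Kf : ℝ}, 0 ≤ Kf →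
        (∀ x ∈ Ico t₀ τ, HasDerivWithinAt f (f' x) (Ico t₀ τ) x) →
        (∀ x ∈ Ico t₀ τ, |f' x| ≤ Kf) →
        ∃ g : ℝ → ℝ, Continuous g ∧ EqOn f g (Ico t₀ τ) := by
      intro f f' Kf hKf hd hb
      have hlip : LipschitzOnWith ⟨Kf, hKf⟩ f (Ico t₀ τ) :=
        (convex_Ico t₀ τ).lipschitzOnWith_of_nnnorm_hasDerivWithin_le hd
          (fun x hx => by
            exact (NNReal.coe_le_coe (r₁ := ‖f' x‖₊) (r₂ := ⟨Kf, hKf⟩)).1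
              (by rw [coe_nnnorm, Real.norm_eq_abs]; exact hb x hx))
      obtain ⟨g, hg1, hg2⟩ := hlip.extend_real
      exact ⟨g, hg1.continuous, hg2⟩
    have htri : ∀ a b : ℝ, |a - b| ≤ |a| + |b| := fun a b => abs_sub a b
    obtain ⟨Φ, hΦc, hΦe⟩ := ext hCy0 (fun x hx => (hsol x hx).1) hyb
    obtain ⟨Y, hYc, hYe⟩ := ext (Kf := 3 * MH * Cy + CV' + Cα * Cρ)
      (by nlinarith [mul_nonneg (mul_nonneg (by norm_num : (0:ℝ) ≤ 3) hMH0) hCy0,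
        mul_nonneg hCα0 hCρ0]) (fun x hx => (hsol x hx).2.1)
      (by
        intro x hx
        have e1 : |(-3 * H x * y x)| = 3 * (|H x| * |y x|) := by
          rw [abs_mul, abs_mul, show |(-3:ℝ)| = 3 from by norm_num]
          ring
        calc |(-3 * H x * y x - deriv V (φ x) + α (φ x) * ρ x)|
            ≤ |(-3 * H x * y x - deriv V (φ x))| + |α (φ x) * ρ x| := abs_add_le _ _
          _ ≤ (|(-3 * H x * y x)| + |deriv V (φ x)|) + |α (φ x)| * |ρ x| := by
              rw [abs_mul]; exact add_le_add_left (htri _ _) _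
          _ ≤ (3 * (MH * Cy) + CV') + Cα * Cρ := by
              rw [e1]
              gcongr
              · exact hMH x hx
              · exact hyb x hx
              · exact hCV' _ (hφK x hx)
              · exact hCα _ (hφK x hx)
              · exact hρb x hx
          _ = 3 * MH * Cy + CV' + Cα * Cρ := by ring)
    obtain ⟨R, hRc, hRe⟩ := ext (Kf := Cρ * (3 * γ * MH + Cα * Cy))
      (mul_nonneg hCρ0 (add_nonneg (mul_nonneg (mul_nonneg (by norm_num) hγ.le) hMH0)
        (mul_nonneg hCα0 hCy0))) (fun x hx => (hsol x hx).2.2.1)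
      (by
        intro x hx
        calc |(-(ρ x) * (3 * γ * H x + α (φ x) * y x))|
            = |ρ x| * |3 * γ * H x + α (φ x) * y x| := by rw [abs_mul, abs_neg]
          _ ≤ |ρ x| * (|3 * γ * H x| + |α (φ x) * y x|) := by
              exact mul_le_mul_of_nonneg_left (abs_add_le _ _) (abs_nonneg _)
          _ = |ρ x| * (3 * γ * |H x| + |α (φ x)| * |y x|) := by
              rw [abs_mul, abs_mul, abs_mul]
              rw [show |(3:ℝ)| = 3 from by norm_num, abs_of_nonneg hγ.le]
          _ ≤ Cρ * (3 * γ * MH + Cα * Cy) := by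
              gcongr
              · exact hρb x hx
              · exact hMH x hx
              · exact hCα _ (hφK x hx)
              · exact hyb x hx)
    have hHb' : ∀ x ∈ Ico t₀ τ, |(-(1/2) * (y x ^ 2 + γ * ρ x))| ≤
        (1/2) * ((6 * MH ^ 2 + 2 * CV) + γ * Cρ) := by
      intro x hx
      have h1 : (0:ℝ) ≤ y x ^ 2 + γ * ρ x := by
        nlinarith [mul_nonneg hγ.le (hρpos x hx), sq_nonneg (y x)]
      rw [abs_mul, abs_of_nonneg h1, show |(-(1/2):ℝ)| = 1/2 from by norm_num]
      have h2 := hy2 x hx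
      have h3 : γ * ρ x ≤ γ * Cρ := by
        have := hρb x hx
        have := le_abs_self (ρ x)
        nlinarith
      linarith
    obtain ⟨Hh, hHhc, hHhe⟩ := ext (Kf := (1/2) * ((6 * MH ^ 2 + 2 * CV) + γ * Cρ))
      (by nlinarith [sq_nonneg MH, mul_nonneg hγ.le hCρ0]) (fun x hx => (hsol x hx).2.2.2) hHb'
    -- transfer derivatives to Icc
    have hmemnb : ∀ {t}, t ∈ Ico t₀ τ → Ico t₀ τ ∈ 𝓝[Icc t₀ τ] t := by
      intro t ht
      rw [mem_nhdsWithin]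
      exact ⟨Iio τ, isOpen_Iio, ht.2, fun u hu => ⟨hu.2.1, hu.1⟩⟩
    have conv : ∀ {f F : ℝ → ℝ} {v t}, EqOn f F (Ico t₀ τ) → t ∈ Ico t₀ τ →
        HasDerivWithinAt f v (Ico t₀ τ) t → HasDerivWithinAt F v (Icc t₀ τ) t := by
      intro f F v t he ht hd
      refine (hd.mono_of_mem_nhdsWithin (hmemnb ht)).congr_of_eventuallyEq ?_ (he ht).symm
      exact mem_of_superset (hmemnb ht) (fun u hu => (he hu).symm)
    have hItilde : ∀ t ∈ Ico t₀ τ,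
        HasDerivWithinAt Φ (Y t) (Icc t₀ τ) t ∧
        HasDerivWithinAt Y (-3 * Hh t * Y t - deriv V (Φ t) + α (Φ t) * R t) (Icc t₀ τ) t ∧
        HasDerivWithinAt R (-(R t) * (3 * γ * Hh t + α (Φ t) * Y t)) (Icc t₀ τ) t ∧
        HasDerivWithinAt Hh (-(1/2) * (Y t ^ 2 + γ * R t)) (Icc t₀ τ) t := by
      intro t ht
      obtain ⟨d1, d2, d3, d4⟩ := hsol t ht
      refine ⟨?_, ?_, ?_, ?_⟩
      · rw [← hYe ht]; exact conv hΦe ht d1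
      · rw [← hYe ht, ← hΦe ht, ← hRe ht, ← hHhe ht]; exact conv hYe ht d2
      · rw [← hYe ht, ← hΦe ht, ← hRe ht, ← hHhe ht]; exact conv hRe ht d3
      · rw [← hYe ht, ← hRe ht]; exact conv hHhe ht d4
    have hsolIcc : IsFLRWSolution γ α V (Icc t₀ τ) Φ Y R Hh := by
      intro t ht
      rcases lt_or_eq_of_le ht.2 with hlt | heq
      · exact hItilde t ⟨ht.1, hlt⟩
      · subst heq
        have hani : ∀ (F G : ℝ → ℝ), (∀ x ∈ Ico t₀ t, HasDerivWithinAt F (G x) (Icc t₀ t) x) →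
            Continuous F → Continuous G → HasDerivWithinAt F (G t) (Icc t₀ t) t := by
          intro F G hFG hFc hGc
          exact endpoint_hasDerivWithinAt hτ
            (fun x hx => (hFG x ⟨hx.1.le, hx.2⟩).hasDerivAt (Icc_mem_nhds hx.1 hx.2)) hFc hGc
        have hdV : Continuous (deriv V) := hV.continuous_deriv (by norm_num)
        refine ⟨?_, ?_, ?_, ?_⟩
        · exact hani Φ Y (fun x hx => (hItilde x hx).1) hΦc hYc
        · exact hani Y (fun u => -3 * Hh u * Y u - deriv V (Φ u) + α (Φ u) * R u)
            (fun x hx => (hItilde x hx).2.1) hYc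
            ((((continuous_const.mul hHhc).mul hYc).sub (hdV.comp hΦc)).add
              ((hα.comp hΦc).mul hRc))
        · exact hani R (fun u => -(R u) * (3 * γ * Hh u + α (Φ u) * Y u))
            (fun x hx => (hItilde x hx).2.2.1) hRc
            (hRc.neg.mul ((continuous_const.mul hHhc).add ((hα.comp hΦc).mul hYc)))
        · exact hani Hh (fun u => -(1/2) * (Y u ^ 2 + γ * R u))
            (fun x hx => (hItilde x hx).2.2.2) hHhc
            (continuous_const.mul ((hYc.pow 2).add (continuous_const.mul hRc)))
    apply hmax
    left
    refine ⟨EReal.coe_ne_top τ, ?_⟩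
    rw [show ((τ : EReal)).toReal = τ from EReal.toReal_coe τ]
    exact ⟨Φ, Y, R, Hh, hsolIcc,
      by rw [hIeq]; exact hΦe, by rw [hIeq]; exact hYe,
      by rw [hIeq]; exact hRe, by rw [hIeq]; exact hHhe⟩
  · -- unbounded: H tends to -∞
    push_neg at hbdd
    refine tendsto_atBot.2 fun M => ?_
    obtain ⟨t', ht'I, ht'M⟩ := hbdd M
    have ht'τ : t' < τ := by
      have := ht'I.2; exact EReal.coe_lt_coe_iff.1 this
    refine mem_comap.2 ⟨Ioo (t' : EReal) (τ : EReal),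
      Ioo_mem_nhdsLT_of_mem ⟨EReal.coe_lt_coe_iff.2 ht'τ, le_refl _⟩, ?_⟩
    intro t htmem
    simp only [mem_preimage, mem_Ioo] at htmem
    have h1 : t' < t := EReal.coe_lt_coe_iff.1 htmem.1
    have htI : t ∈ IcoE t₀ (τ : EReal) := ⟨le_trans ht'I.1 h1.le, htmem.2⟩
    exact le_trans (hHanti ht'I htI h1.le) ht'M.le
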